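/- arXiv:2110.04787 — 7 statements merged into one kernel-verified Lean document; each statement's English description precedes it below -/
import Mathlib

section
/- Let X, Y, Z be integrable real-valued random variables on a probability space that are mutually independent. Then E|Y−Z|·E|X| − E|X−Z|·E|Y| + E|X−Y|·E|Z| ≥ 0. -/
open MeasureTheory ProbabilityTheory

/-- Mutual independence is stable under a.e. modification. -/
lemma iIndepFun_ae_eq_aux {Ω ι : Type*} {mΩ : MeasurableSpace Ω} {μ : MeasureTheory.Measure Ω}
    {β : ι → Type*} {m : ∀ i, MeasurableSpace (β i)} {f g : ∀ i, Ω → β i}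
    (h : iIndepFun f μ) (heq : ∀ i, f i =ᵐ[μ] g i) : iIndepFun g μ := by
  rw [iIndepFun_iff_measure_inter_preimage_eq_mul] at h ⊢
  intro S sets H
  have hS : ∀ᵐ ω ∂μ, ∀ i ∈ S, f i ω = g i ω := (Filter.eventually_all_finset S).2 fun i _ => heq i
  have e1 : μ (⋂ i ∈ S, g i ⁻¹' sets i) = μ (⋂ i ∈ S, f i ⁻¹' sets i) := by
    apply measure_congr
    filter_upwards [hS] with ω hω
    show (ω ∈ ⋂ i ∈ S, g i ⁻¹' sets i) = (ω ∈ ⋂ i ∈ S, f i ⁻¹' sets i)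
    simp only [Set.mem_iInter, Set.mem_preimage, eq_iff_iff]
    constructor <;> intro h' i hi <;> have := h' i hi
    · rwa [hω i hi]
    · rwa [← hω i hi]
  have e2 : ∀ i ∈ S, μ (g i ⁻¹' sets i) = μ (f i ⁻¹' sets i) := by
    intro i hi
    apply measure_congr
    filter_upwards [heq i] with ω hω
    show (ω ∈ g i ⁻¹' sets i) = (ω ∈ f i ⁻¹' sets i)
    simp only [Set.mem_preimage, eq_iff_iff, hω]
  rw [e1, Finset.prod_congr rfl e2]
  exact h S H

/-- Pointwise Ptolemy inequality on the real line with one point at `0`. -/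
lemma abs_ptolemy_aux (x y z : ℝ) : |x - z| * |y| ≤ |y - z| * |x| + |x - y| * |z| := by
  have hid : (x - z) * y = (y - z) * x + (x - y) * z := by ring
  calc |x - z| * |y| = |(x - z) * y| := (abs_mul _ _).symm
    _ = |(y - z) * x + (x - y) * z| := by rw [hid]
    _ ≤ |(y - z) * x| + |(x - y) * z| := abs_add_le _ _
    _ = |y - z| * |x| + |x - y| * |z| := by rw [abs_mul, abs_mul]

/-- For mutually independent integrable real random variables `X, Y, Z`,
`E|Y−Z|·E|X| − E|X−Z|·E|Y| + E|X−Y|·E|Z| ≥ 0`. -/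
theorem expected_abs_diff_ptolemy_like
    {Ω : Type*} {mΩ : MeasurableSpace Ω} (P : Measure Ω) [IsProbabilityMeasure P]
    (X Y Z : Ω → ℝ)
    (hX : Integrable X P) (hY : Integrable Y P) (hZ : Integrable Z P)
    (hindep : iIndepFun ![X, Y, Z] P) :
    0 ≤ (∫ ω, |Y ω - Z ω| ∂P) * (∫ ω, |X ω| ∂P)
        - (∫ ω, |X ω - Z ω| ∂P) * (∫ ω, |Y ω| ∂P)
        + (∫ ω, |X ω - Y ω| ∂P) * (∫ ω, |Z ω| ∂P) := by
  -- replace X, Y, Z by measurable a.e.-equal versions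
  set X' := hX.1.mk X with hX'def
  set Y' := hY.1.mk Y with hY'def
  set Z' := hZ.1.mk Z with hZ'def
  have hXm : Measurable X' := hX.1.measurable_mk
  have hYm : Measurable Y' := hY.1.measurable_mk
  have hZm : Measurable Z' := hZ.1.measurable_mk
  have hXe : X =ᵐ[P] X' := hX.1.ae_eq_mk
  have hYe : Y =ᵐ[P] Y' := hY.1.ae_eq_mk
  have hZe : Z =ᵐ[P] Z' := hZ.1.ae_eq_mk
  have hX' : Integrable X' P := hX.congr hXe
  have hY' : Integrable Y' P := hY.congr hYe
  have hZ' : Integrable Z' P := hZ.congr hZe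
  have hindep' : iIndepFun ![X', Y', Z'] P := by
    refine iIndepFun_ae_eq_aux hindep ?_
    intro i
    fin_cases i
    · simpa using hXe
    · simpa using hYe
    · simpa using hZe
  have hm : ∀ i, Measurable (![X', Y', Z'] i) := by
    intro i; fin_cases i <;> simpa using ‹_›
  -- pairwise independence of the relevant functions
  have iYZX : IndepFun (fun ω => |Y' ω - Z' ω|) (fun ω => |X' ω|) P := by
    have h1 : IndepFun (fun a => (Y' a, Z' a)) X' P := by
      have := hindep'.indepFun_prodMk hm 1 2 0 (by decide) (by decide)
      simpa using this
    exact h1.comp ((measurable_fst.sub measurable_snd).abs) measurable_id.abs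
  have iXZY : IndepFun (fun ω => |X' ω - Z' ω|) (fun ω => |Y' ω|) P := by
    have h1 : IndepFun (fun a => (X' a, Z' a)) Y' P := by
      have := hindep'.indepFun_prodMk hm 0 2 1 (by decide) (by decide)
      simpa using this
    exact h1.comp ((measurable_fst.sub measurable_snd).abs) measurable_id.abs
  have iXYZ : IndepFun (fun ω => |X' ω - Y' ω|) (fun ω => |Z' ω|) P := by
    have h1 : IndepFun (fun a => (X' a, Y' a)) Z' P := by
      have := hindep'.indepFun_prodMk hm 0 1 2 (by decide) (by decide)
      simpa using this
    exact h1.comp ((measurable_fst.sub measurable_snd).abs) measurable_id.abs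
  -- integrability of products
  have intYZ : Integrable (fun ω => |Y' ω - Z' ω|) P := (hY'.sub hZ').abs
  have intXZ : Integrable (fun ω => |X' ω - Z' ω|) P := (hX'.sub hZ').abs
  have intXY : Integrable (fun ω => |X' ω - Y' ω|) P := (hX'.sub hY').abs
  have intaX : Integrable (fun ω => |X' ω|) P := hX'.abs
  have intaY : Integrable (fun ω => |Y' ω|) P := hY'.abs
  have intaZ : Integrable (fun ω => |Z' ω|) P := hZ'.abs
  have int1 : Integrable (fun ω => |Y' ω - Z' ω| * |X' ω|) P := iYZX.integrable_mul intYZ intaX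
  have int2 : Integrable (fun ω => |X' ω - Z' ω| * |Y' ω|) P := iXZY.integrable_mul intXZ intaY
  have int3 : Integrable (fun ω => |X' ω - Y' ω| * |Z' ω|) P := iXYZ.integrable_mul intXY intaZ
  -- the key nonnegativity
  have key : 0 ≤ ∫ ω, (|Y' ω - Z' ω| * |X' ω| - |X' ω - Z' ω| * |Y' ω|
      + |X' ω - Y' ω| * |Z' ω|) ∂P := by
    refine integral_nonneg fun ω => ?_
    have := abs_ptolemy_aux (X' ω) (Y' ω) (Z' ω)
    simp only [Pi.zero_apply]
    linarith
  have int12 : Integrable (fun ω => |Y' ω - Z' ω| * |X' ω| - |X' ω - Z' ω| * |Y' ω|) P :=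
    int1.sub int2
  rw [integral_add int12 int3, integral_sub int1 int2,
    iYZX.integral_fun_mul_eq_mul_integral intYZ.aestronglyMeasurable intaX.aestronglyMeasurable,
    iXZY.integral_fun_mul_eq_mul_integral intXZ.aestronglyMeasurable intaY.aestronglyMeasurable,
    iXYZ.integral_fun_mul_eq_mul_integral intXY.aestronglyMeasurable intaZ.aestronglyMeasurable] at key
  -- transfer back to the original variables
  have e1 : (∫ ω, |Y ω - Z ω| ∂P) = ∫ ω, |Y' ω - Z' ω| ∂P :=
    integral_congr_ae (by filter_upwards [hYe, hZe] with ω h1 h2; rw [h1, h2])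
  have e2 : (∫ ω, |X ω - Z ω| ∂P) = ∫ ω, |X' ω - Z' ω| ∂P :=
    integral_congr_ae (by filter_upwards [hXe, hZe] with ω h1 h2; rw [h1, h2])
  have e3 : (∫ ω, |X ω - Y ω| ∂P) = ∫ ω, |X' ω - Y' ω| ∂P :=
    integral_congr_ae (by filter_upwards [hXe, hYe] with ω h1 h2; rw [h1, h2])
  have e4 : (∫ ω, |X ω| ∂P) = ∫ ω, |X' ω| ∂P :=
    integral_congr_ae (by filter_upwards [hXe] with ω h1; rw [h1])
  have e5 : (∫ ω, |Y ω| ∂P) = ∫ ω, |Y' ω| ∂P :=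
    integral_congr_ae (by filter_upwards [hYe] with ω h1; rw [h1])
  have e6 : (∫ ω, |Z ω| ∂P) = ∫ ω, |Z' ω| ∂P :=
    integral_congr_ae (by filter_upwards [hZe] with ω h1; rw [h1])
  rw [e1, e2, e3, e4, e5, e6]
  exact key
end

section
/- Let X and Y be independent integrable real-valued random variables whose laws are absolutely continuous with respect to Lebesgue measure, with means μ_X = E(X), μ_Y = E(Y), and cumulative distribution functions F (of X) and G (of Y). Then E|X−Y| = 2·( E[X·G(X)] + E[Y·F(Y)] ) − μ_X − μ_Y. -/
open MeasureTheory ProbabilityTheory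

section Aux

variable (μ ν : Measure ℝ) [IsProbabilityMeasure μ] [IsProbabilityMeasure ν]

lemma aux_int_fst (hμ : Integrable id μ) : Integrable (fun p : ℝ × ℝ => p.1) (μ.prod ν) := by
  have h : (μ.prod ν).map Prod.fst = μ := by
    rw [Measure.map_fst_prod]; simp
  have hsm : AEStronglyMeasurable (id : ℝ → ℝ) ((μ.prod ν).map Prod.fst) :=
    aestronglyMeasurable_id
  rw [← h] at hμ
  exact (integrable_map_measure hsm measurable_fst.aemeasurable).mp hμ

lemma aux_int_snd (hν : Integrable id ν) : Integrable (fun p : ℝ × ℝ => p.2) (μ.prod ν) := by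
  have h : (μ.prod ν).map Prod.snd = ν := by
    rw [Measure.map_snd_prod]; simp
  have hsm : AEStronglyMeasurable (id : ℝ → ℝ) ((μ.prod ν).map Prod.snd) :=
    aestronglyMeasurable_id
  rw [← h] at hν
  exact (integrable_map_measure hsm measurable_snd.aemeasurable).mp hν

lemma aux_cdf_mono : Monotone (fun x => (ν (Set.Iic x)).toReal) := fun a b hab =>
  ENNReal.toReal_mono (measure_ne_top _ _) (measure_mono (Set.Iic_subset_Iic.mpr hab))

lemma aux_cdf_le_one (x : ℝ) : (ν (Set.Iic x)).toReal ≤ 1 :=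
  le_of_le_of_eq (ENNReal.toReal_mono ENNReal.one_ne_top prob_le_one) ENNReal.toReal_one

lemma aux_int_xg (hμ : Integrable id μ) :
    Integrable (fun x : ℝ => x * (ν (Set.Iic x)).toReal) μ := by
  refine Integrable.mono' hμ.abs
    (measurable_id.mul (aux_cdf_mono ν).measurable).aestronglyMeasurable
    (Filter.Eventually.of_forall fun x => ?_)
  rw [Real.norm_eq_abs, abs_mul]
  calc |x| * |(ν (Set.Iic x)).toReal| ≤ |x| * 1 := by
        refine mul_le_mul_of_nonneg_left ?_ (abs_nonneg _)
        rw [abs_of_nonneg ENNReal.toReal_nonneg]; exact aux_cdf_le_one ν x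
    _ = |id x| := by simp

lemma aux_Ici (hμac : μ ≪ volume) (x : ℝ) :
    (μ (Set.Ici x)).toReal = 1 - (μ (Set.Iic x)).toReal := by
  have hatom : μ {x} = 0 := hμac Real.volume_singleton
  have h2 : μ (Set.Iic x) = μ (Set.Iio x) := by
    rw [← Set.Iio_union_right,
      measure_union (Set.disjoint_singleton_right.mpr (by simp)) (measurableSet_singleton x),
      hatom, add_zero]
  have h3 : μ (Set.Ici x) = 1 - μ (Set.Iio x) := by
    rw [← Set.compl_Iio, measure_compl measurableSet_Iio (measure_ne_top _ _), measure_univ]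
  rw [h3, h2, ENNReal.toReal_sub_of_le prob_le_one ENNReal.one_ne_top, ENNReal.toReal_one]

end Aux

theorem abs_diff_core (μ ν : Measure ℝ) [IsProbabilityMeasure μ] [IsProbabilityMeasure ν]
    (hμ : Integrable id μ) (hν : Integrable id ν)
    (hμac : μ ≪ volume) (hνac : ν ≪ volume) :
    ∫ p : ℝ × ℝ, |p.1 - p.2| ∂(μ.prod ν) =
      2 * ((∫ x, x * (ν (Set.Iic x)).toReal ∂μ) + (∫ y, y * (μ (Set.Iic y)).toReal ∂ν))
        - (∫ x, x ∂μ) - (∫ y, y ∂ν) := by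
  have hμ' : Integrable (fun x : ℝ => x) μ := hμ
  have hν' : Integrable (fun y : ℝ => y) ν := hν
  have hs : MeasurableSet {p : ℝ × ℝ | p.2 ≤ p.1} :=
    measurableSet_le measurable_snd measurable_fst
  have hs' : MeasurableSet {p : ℝ × ℝ | p.1 ≤ p.2} :=
    measurableSet_le measurable_fst measurable_snd
  have h1int : Integrable (fun p : ℝ × ℝ => p.1) (μ.prod ν) := aux_int_fst μ ν hμ
  have h2int : Integrable (fun p : ℝ × ℝ => p.2) (μ.prod ν) := aux_int_snd μ ν hν
  set F1 : ℝ × ℝ → ℝ := fun p => if p.2 ≤ p.1 then p.1 else 0 with hF1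
  set F2 : ℝ × ℝ → ℝ := fun p => if p.2 ≤ p.1 then p.2 else 0 with hF2
  set F3 : ℝ × ℝ → ℝ := fun p => if p.1 ≤ p.2 then p.2 else 0 with hF3
  set F4 : ℝ × ℝ → ℝ := fun p => if p.1 ≤ p.2 then p.1 else 0 with hF4
  have hm1 : Measurable F1 := Measurable.ite hs measurable_fst measurable_const
  have hm2 : Measurable F2 := Measurable.ite hs measurable_snd measurable_const
  have hm3 : Measurable F3 := Measurable.ite hs' measurable_snd measurable_const
  have hm4 : Measurable F4 := Measurable.ite hs' measurable_fst measurable_const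
  have hb1 : ∀ p : ℝ × ℝ, ‖F1 p‖ ≤ |p.1| := by
    intro p; simp only [hF1]; split <;> simp [abs_nonneg]
  have hb2 : ∀ p : ℝ × ℝ, ‖F2 p‖ ≤ |p.2| := by
    intro p; simp only [hF2]; split <;> simp [abs_nonneg]
  have hb3 : ∀ p : ℝ × ℝ, ‖F3 p‖ ≤ |p.2| := by
    intro p; simp only [hF3]; split <;> simp [abs_nonneg]
  have hb4 : ∀ p : ℝ × ℝ, ‖F4 p‖ ≤ |p.1| := by
    intro p; simp only [hF4]; split <;> simp [abs_nonneg]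
  have hi1 : Integrable F1 (μ.prod ν) :=
    Integrable.mono' h1int.abs hm1.aestronglyMeasurable (Filter.Eventually.of_forall hb1)
  have hi2 : Integrable F2 (μ.prod ν) :=
    Integrable.mono' h2int.abs hm2.aestronglyMeasurable (Filter.Eventually.of_forall hb2)
  have hi3 : Integrable F3 (μ.prod ν) :=
    Integrable.mono' h2int.abs hm3.aestronglyMeasurable (Filter.Eventually.of_forall hb3)
  have hi4 : Integrable F4 (μ.prod ν) :=
    Integrable.mono' h1int.abs hm4.aestronglyMeasurable (Filter.Eventually.of_forall hb4)
  have hpt : ∀ p : ℝ × ℝ, |p.1 - p.2| = F1 p - F2 p + (F3 p - F4 p) := by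
    intro p
    simp only [hF1, hF2, hF3, hF4]
    rcases le_total p.2 p.1 with h | h
    · rw [if_pos h, if_pos h, abs_of_nonneg (by linarith)]
      rcases eq_or_lt_of_le h with he | hlt
      · simp [he]
      · rw [if_neg (not_le.mpr hlt), if_neg (not_le.mpr hlt)]; ring
    · rw [if_pos h, if_pos h, abs_of_nonpos (by linarith)]
      rcases eq_or_lt_of_le h with he | hlt
      · simp [← he]
      · rw [if_neg (not_le.mpr hlt), if_neg (not_le.mpr hlt)]; ring
  have hixg : Integrable (fun x : ℝ => x * (ν (Set.Iic x)).toReal) μ := aux_int_xg μ ν hμ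
  have hiyf : Integrable (fun y : ℝ => y * (μ (Set.Iic y)).toReal) ν := aux_int_xg ν μ hν
  -- compute the four integrals
  have e1 : ∫ p, F1 p ∂(μ.prod ν) = ∫ x, x * (ν (Set.Iic x)).toReal ∂μ := by
    rw [integral_prod _ hi1]
    refine integral_congr_ae (Filter.Eventually.of_forall fun x => ?_)
    show (∫ y, F1 (x, y) ∂ν) = x * (ν (Set.Iic x)).toReal
    have h : (fun y => F1 (x, y)) = (Set.Iic x).indicator (fun _ => x) := by
      funext y; simp [hF1, Set.indicator, Set.mem_Iic]
    rw [h, integral_indicator measurableSet_Iic, setIntegral_const, smul_eq_mul, mul_comm, measureReal_def]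
  have e4 : ∫ p, F4 p ∂(μ.prod ν) = ∫ x, x * (ν (Set.Ici x)).toReal ∂μ := by
    rw [integral_prod _ hi4]
    refine integral_congr_ae (Filter.Eventually.of_forall fun x => ?_)
    show (∫ y, F4 (x, y) ∂ν) = x * (ν (Set.Ici x)).toReal
    have h : (fun y => F4 (x, y)) = (Set.Ici x).indicator (fun _ => x) := by
      funext y; simp [hF4, Set.indicator, Set.mem_Ici]
    rw [h, integral_indicator measurableSet_Ici, setIntegral_const, smul_eq_mul, mul_comm, measureReal_def]
  have e3 : ∫ p, F3 p ∂(μ.prod ν) = ∫ y, y * (μ (Set.Iic y)).toReal ∂ν := by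
    rw [integral_prod_symm _ hi3]
    refine integral_congr_ae (Filter.Eventually.of_forall fun y => ?_)
    show (∫ x, F3 (x, y) ∂μ) = y * (μ (Set.Iic y)).toReal
    have h : (fun x => F3 (x, y)) = (Set.Iic y).indicator (fun _ => y) := by
      funext x; simp [hF3, Set.indicator, Set.mem_Iic]
    rw [h, integral_indicator measurableSet_Iic, setIntegral_const, smul_eq_mul, mul_comm, measureReal_def]
  have e2 : ∫ p, F2 p ∂(μ.prod ν) = ∫ y, y * (μ (Set.Ici y)).toReal ∂ν := by
    rw [integral_prod_symm _ hi2]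
    refine integral_congr_ae (Filter.Eventually.of_forall fun y => ?_)
    show (∫ x, F2 (x, y) ∂μ) = y * (μ (Set.Ici y)).toReal
    have h : (fun x => F2 (x, y)) = (Set.Ici y).indicator (fun _ => y) := by
      funext x; simp [hF2, Set.indicator, Set.mem_Ici]
    rw [h, integral_indicator measurableSet_Ici, setIntegral_const, smul_eq_mul, mul_comm, measureReal_def]
  have e4' : ∫ x, x * (ν (Set.Ici x)).toReal ∂μ
      = (∫ x, x ∂μ) - ∫ x, x * (ν (Set.Iic x)).toReal ∂μ := by
    have h : (fun x : ℝ => x * (ν (Set.Ici x)).toReal)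
        = fun x => x - x * (ν (Set.Iic x)).toReal := by
      funext x; rw [aux_Ici ν hνac x]; ring
    rw [h, integral_sub hμ' hixg]
  have e2' : ∫ y, y * (μ (Set.Ici y)).toReal ∂ν
      = (∫ y, y ∂ν) - ∫ y, y * (μ (Set.Iic y)).toReal ∂ν := by
    have h : (fun y : ℝ => y * (μ (Set.Ici y)).toReal)
        = fun y => y - y * (μ (Set.Iic y)).toReal := by
      funext y; rw [aux_Ici μ hμac y]; ring
    rw [h, integral_sub hν' hiyf]
  have habs : ∫ p : ℝ × ℝ, |p.1 - p.2| ∂(μ.prod ν)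
      = (∫ p, F1 p ∂(μ.prod ν)) - (∫ p, F2 p ∂(μ.prod ν))
        + ((∫ p, F3 p ∂(μ.prod ν)) - (∫ p, F4 p ∂(μ.prod ν))) := by
    calc ∫ p : ℝ × ℝ, |p.1 - p.2| ∂(μ.prod ν)
        = ∫ p, (F1 p - F2 p) + (F3 p - F4 p) ∂(μ.prod ν) :=
          integral_congr_ae (Filter.Eventually.of_forall fun p => hpt p)
      _ = (∫ p, F1 p - F2 p ∂(μ.prod ν)) + ∫ p, F3 p - F4 p ∂(μ.prod ν) :=
          integral_add (hi1.sub hi2) (hi3.sub hi4)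
      _ = _ := by rw [integral_sub hi1 hi2, integral_sub hi3 hi4]
  rw [habs, e1, e2, e3, e4, e2', e4']
  ring

/-- for independent integrable absolutely continuous real random variables
`X, Y`, with cdf's `F, G` and means `μ_X, μ_Y`,
`E|X−Y| = 2·(E[X·G(X)] + E[Y·F(Y)]) − μ_X − μ_Y`. -/
theorem expected_abs_diff_eq_covariance_form
    {Ω : Type*} {mΩ : MeasurableSpace Ω} (P : Measure Ω) [IsProbabilityMeasure P]
    (X Y : Ω → ℝ) (hXm : Measurable X) (hYm : Measurable Y)
    (hX : Integrable X P) (hY : Integrable Y P)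
    (hindep : IndepFun X Y P)
    (hXac : P.map X ≪ volume) (hYac : P.map Y ≪ volume)
    (F G : ℝ → ℝ)
    (hF : ∀ x, F x = (P (X ⁻¹' Set.Iic x)).toReal)
    (hG : ∀ x, G x = (P (Y ⁻¹' Set.Iic x)).toReal) :
    ∫ ω, |X ω - Y ω| ∂P =
      2 * ((∫ ω, X ω * G (X ω) ∂P) + (∫ ω, Y ω * F (Y ω) ∂P))
        - (∫ ω, X ω ∂P) - (∫ ω, Y ω ∂P) := by
  set μ := P.map X with hμdef
  set ν := P.map Y with hνdef
  haveI : IsProbabilityMeasure μ := Measure.isProbabilityMeasure_map hXm.aemeasurable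
  haveI : IsProbabilityMeasure ν := Measure.isProbabilityMeasure_map hYm.aemeasurable
  have hμint : Integrable id μ := by
    rw [hμdef, integrable_map_measure aestronglyMeasurable_id hXm.aemeasurable]
    exact hX
  have hνint : Integrable id ν := by
    rw [hνdef, integrable_map_measure aestronglyMeasurable_id hYm.aemeasurable]
    exact hY
  have hprod : P.map (fun ω => (X ω, Y ω)) = μ.prod ν :=
    (indepFun_iff_map_prod_eq_prod_map_map hXm.aemeasurable hYm.aemeasurable).mp hindep
  have hT : Measurable fun ω => (X ω, Y ω) := hXm.prodMk hYm
  -- cdf identifications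
  have hGid : ∀ x, G x = (ν (Set.Iic x)).toReal := by
    intro x; rw [hG x, hνdef, Measure.map_apply hYm measurableSet_Iic]
  have hFid : ∀ y, F y = (μ (Set.Iic y)).toReal := by
    intro y; rw [hF y, hμdef, Measure.map_apply hXm measurableSet_Iic]
  -- transfer the integrals
  have t0 : ∫ ω, |X ω - Y ω| ∂P = ∫ p : ℝ × ℝ, |p.1 - p.2| ∂(μ.prod ν) := by
    rw [← hprod, integral_map hT.aemeasurable (f := fun p : ℝ × ℝ => |p.1 - p.2|)
      (measurable_fst.sub measurable_snd).abs.aestronglyMeasurable]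
  have t1 : ∫ ω, X ω * G (X ω) ∂P = ∫ x, x * (ν (Set.Iic x)).toReal ∂μ := by
    rw [hμdef, integral_map hXm.aemeasurable (f := fun x : ℝ => x * (ν (Set.Iic x)).toReal)
      (measurable_id'.mul (aux_cdf_mono ν).measurable).aestronglyMeasurable]
    exact integral_congr_ae (Filter.Eventually.of_forall fun ω => by simp only [hGid])
  have t2 : ∫ ω, Y ω * F (Y ω) ∂P = ∫ y, y * (μ (Set.Iic y)).toReal ∂ν := by
    rw [hνdef, integral_map hYm.aemeasurable (f := fun y : ℝ => y * (μ (Set.Iic y)).toReal)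
      (measurable_id'.mul (aux_cdf_mono μ).measurable).aestronglyMeasurable]
    exact integral_congr_ae (Filter.Eventually.of_forall fun ω => by simp only [hFid])
  have t3 : ∫ ω, X ω ∂P = ∫ x, x ∂μ := by
    rw [hμdef, integral_map hXm.aemeasurable measurable_id'.aestronglyMeasurable]
  have t4 : ∫ ω, Y ω ∂P = ∫ y, y ∂ν := by
    rw [hνdef, integral_map hYm.aemeasurable measurable_id'.aestronglyMeasurable]
  rw [t0, t1, t2, t3, t4]
  exact abs_diff_core μ ν hμint hνint hXac hYac
end

section
/- Let X and Y be independent identically distributed integrable real-valued random variables whose common law is absolutely continuous with respect to Lebesgue measure, and let F be their common cumulative distribution function. Then E|X−Y| = 4·E[X·F(X)] − 2·E(X). -/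
open MeasureTheory ProbabilityTheory
open scoped ENNReal

lemma measurable_cdfAux (μ : Measure ℝ) [IsFiniteMeasure μ] :
    Measurable fun x => (μ (Set.Iic x)).toReal := by
  have hmono : Monotone fun x => (μ (Set.Iic x)).toReal := fun a b hab =>
    ENNReal.toReal_mono (measure_ne_top μ _) (measure_mono (Set.Iic_subset_Iic.2 hab))
  exact hmono.measurable

lemma cdfAux_nonneg (μ : Measure ℝ) (x : ℝ) : 0 ≤ (μ (Set.Iic x)).toReal :=
  ENNReal.toReal_nonneg

lemma cdfAux_le_one (μ : Measure ℝ) [IsProbabilityMeasure μ] (x : ℝ) :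
    (μ (Set.Iic x)).toReal ≤ 1 := by
  have := prob_le_one (μ := μ) (s := Set.Iic x)
  calc (μ (Set.Iic x)).toReal ≤ (1 : ℝ≥0∞).toReal :=
        ENNReal.toReal_mono (by simp) this
    _ = 1 := by simp

lemma key_prod (μ : Measure ℝ) [IsProbabilityMeasure μ] (hac : μ ≪ volume)
    (hint : Integrable (fun x : ℝ => x) μ) :
    ∫ p : ℝ × ℝ, |p.1 - p.2| ∂(μ.prod μ)
      = 4 * ∫ x, x * (μ (Set.Iic x)).toReal ∂μ - 2 * ∫ x, x ∂μ := by
  set G : ℝ → ℝ := fun x => (μ (Set.Iic x)).toReal with hGdef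
  have hGmeas : Measurable G := measurable_cdfAux μ
  -- integrability of coordinates
  have hmapfst : (μ.prod μ).map Prod.fst = μ := by
    simp [Measure.map_fst_prod]
  have hmapsnd : (μ.prod μ).map Prod.snd = μ := by
    simp [Measure.map_snd_prod]
  have hf1 : Integrable (fun p : ℝ × ℝ => p.1) (μ.prod μ) := by
    have := (integrable_map_measure (f := (Prod.fst : ℝ × ℝ → ℝ))
      (g := fun x : ℝ => x) (μ := μ.prod μ)
      aestronglyMeasurable_id measurable_fst.aemeasurable)
    rw [hmapfst] at this
    exact this.mp hint
  have hf2 : Integrable (fun p : ℝ × ℝ => p.2) (μ.prod μ) := by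
    have := (integrable_map_measure (f := (Prod.snd : ℝ × ℝ → ℝ))
      (g := fun x : ℝ => x) (μ := μ.prod μ)
      aestronglyMeasurable_id measurable_snd.aemeasurable)
    rw [hmapsnd] at this
    exact this.mp hint
  -- the three indicator-type functions
  set h : ℝ × ℝ → ℝ := fun p => if p.2 ≤ p.1 then p.1 else 0 with hhdef
  set h' : ℝ × ℝ → ℝ := fun p => if p.1 < p.2 then p.2 else 0 with hh'def
  set h'' : ℝ × ℝ → ℝ := fun p => if p.2 < p.1 then p.1 else 0 with hh''def
  have hhm : Measurable h := Measurable.ite (measurableSet_le measurable_snd measurable_fst)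
    measurable_fst measurable_const
  have hh'm : Measurable h' := Measurable.ite (measurableSet_lt measurable_fst measurable_snd)
    measurable_snd measurable_const
  have hh''m : Measurable h'' := Measurable.ite (measurableSet_lt measurable_snd measurable_fst)
    measurable_fst measurable_const
  have hhint : Integrable h (μ.prod μ) := by
    refine hf1.mono hhm.aestronglyMeasurable (Filter.Eventually.of_forall fun p => ?_)
    simp only [hhdef, Real.norm_eq_abs]
    split <;> simp [abs_nonneg]
  have hh'int : Integrable h' (μ.prod μ) := by
    refine hf2.mono hh'm.aestronglyMeasurable (Filter.Eventually.of_forall fun p => ?_)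
    simp only [hh'def, Real.norm_eq_abs]
    split <;> simp [abs_nonneg]
  have hh''int : Integrable h'' (μ.prod μ) := by
    refine hf1.mono hh''m.aestronglyMeasurable (Filter.Eventually.of_forall fun p => ?_)
    simp only [hh''def, Real.norm_eq_abs]
    split <;> simp [abs_nonneg]
  -- diagonal is null
  have hdiag : (μ.prod μ) {p : ℝ × ℝ | p.1 = p.2} = 0 := by
    have hms : MeasurableSet {p : ℝ × ℝ | p.1 = p.2} :=
      measurableSet_eq_fun measurable_fst measurable_snd
    rw [Measure.prod_apply hms]
    have hz : ∀ x : ℝ, μ {x} = 0 := fun x => hac (measure_singleton x)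
    have hpre : ∀ x : ℝ, Prod.mk x ⁻¹' {p : ℝ × ℝ | p.1 = p.2} = {x} := by
      intro x; ext y; simp [eq_comm]
    simp [hpre, hz]
  have hne : ∀ᵐ p ∂(μ.prod μ), p.1 ≠ p.2 := by
    rw [ae_iff]
    convert hdiag using 2
    ext p; simp
  -- h = h'' a.e.
  have haeh : h =ᵐ[μ.prod μ] h'' := by
    filter_upwards [hne] with p hp
    simp only [hhdef, hh''def]
    rcases lt_trichotomy p.2 p.1 with hlt | heq | hgt
    · simp [hlt.le, hlt]
    · exact absurd heq.symm hp
    · simp [not_le.2 hgt, not_lt.2 hgt.le]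
  -- swap: ∫ h' = ∫ h''
  have hswap : ∫ p, h' p ∂(μ.prod μ) = ∫ p, h'' p ∂(μ.prod μ) := by
    have := integral_prod_swap (μ := μ) (ν := μ) h''
    rw [← this]
    rfl
  -- Fubini for h
  have hfub : ∫ p, h p ∂(μ.prod μ) = ∫ x, x * G x ∂μ := by
    rw [integral_prod _ hhint]
    refine integral_congr_ae (Filter.Eventually.of_forall fun x => ?_)
    show ∫ y, h (x, y) ∂μ = x * G x
    have hind : (fun y : ℝ => h (x, y)) = (Set.Iic x).indicator fun _ => x := by
      ext y; simp [hhdef, Set.indicator, Set.mem_Iic]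
    rw [hind, integral_indicator_const _ measurableSet_Iic, smul_eq_mul, hGdef, mul_comm]; rfl
  -- pointwise identity
  have hpt : ∀ p : ℝ × ℝ, |p.1 - p.2| = 2 * h p + 2 * h' p - p.1 - p.2 := by
    intro p
    simp only [hhdef, hh'def]
    rcases le_or_gt p.2 p.1 with hle | hlt
    · rw [if_pos hle, if_neg (not_lt.2 hle), abs_of_nonneg (sub_nonneg.2 hle)]; ring
    · rw [if_neg (not_le.2 hlt), if_pos hlt, abs_of_neg (sub_neg.2 hlt)]; ring
  calc ∫ p : ℝ × ℝ, |p.1 - p.2| ∂(μ.prod μ)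
      = ∫ p : ℝ × ℝ, (2 * h p + 2 * h' p - p.1 - p.2) ∂(μ.prod μ) := by
        exact integral_congr_ae (Filter.Eventually.of_forall fun p => hpt p)
    _ = 2 * ∫ p, h p ∂(μ.prod μ) + 2 * ∫ p, h' p ∂(μ.prod μ)
        - ∫ p : ℝ × ℝ, p.1 ∂(μ.prod μ) - ∫ p : ℝ × ℝ, p.2 ∂(μ.prod μ) := by
        have i1 : Integrable (fun p : ℝ × ℝ => 2 * h p + 2 * h' p) (μ.prod μ) :=
          (hhint.const_mul 2).add (hh'int.const_mul 2)
        have i2 : Integrable (fun p : ℝ × ℝ => 2 * h p + 2 * h' p - p.1) (μ.prod μ) :=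
          i1.sub hf1
        rw [integral_sub i2 hf2, integral_sub i1 hf1,
          integral_add (hhint.const_mul 2) (hh'int.const_mul 2),
          integral_const_mul, integral_const_mul]
    _ = 4 * ∫ x, x * G x ∂μ - 2 * ∫ x, x ∂μ := by
        have e1 : ∫ p, h' p ∂(μ.prod μ) = ∫ p, h p ∂(μ.prod μ) := by
          rw [hswap]; exact (integral_congr_ae haeh).symm
        have e2 : ∫ p : ℝ × ℝ, p.1 ∂(μ.prod μ) = ∫ x, x ∂μ := by
          have := integral_map (μ := μ.prod μ) measurable_fst.aemeasurable
            (f := fun x : ℝ => x) aestronglyMeasurable_id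
          rw [hmapfst] at this
          exact this.symm
        have e3 : ∫ p : ℝ × ℝ, p.2 ∂(μ.prod μ) = ∫ x, x ∂μ := by
          have := integral_map (μ := μ.prod μ) measurable_snd.aemeasurable
            (f := fun x : ℝ => x) aestronglyMeasurable_id
          rw [hmapsnd] at this
          exact this.symm
        rw [e1, e2, e3, hfub]; ring

/-- for i.i.d. integrable absolutely continuous real random variables
`X, Y` with common cdf `F`, `E|X−Y| = 4·E[X·F(X)] − 2·E(X)`. -/
theorem expected_abs_diff_iid_eq_four_cov
    {Ω : Type*} {mΩ : MeasurableSpace Ω} (P : Measure Ω) [IsProbabilityMeasure P]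
    (X Y : Ω → ℝ) (hXm : Measurable X) (hYm : Measurable Y)
    (hX : Integrable X P) (hY : Integrable Y P)
    (hindep : IndepFun X Y P)
    (hid : P.map X = P.map Y)
    (hac : P.map X ≪ volume)
    (F : ℝ → ℝ)
    (hF : ∀ x, F x = (P (X ⁻¹' Set.Iic x)).toReal) :
    ∫ ω, |X ω - Y ω| ∂P = 4 * (∫ ω, X ω * F (X ω) ∂P) - 2 * (∫ ω, X ω ∂P) := by
  set μ : Measure ℝ := P.map X with hμdef
  have hprob : IsProbabilityMeasure μ := Measure.isProbabilityMeasure_map hXm.aemeasurable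
  have hjoint : P.map (fun ω => (X ω, Y ω)) = μ.prod μ := by
    rw [(indepFun_iff_map_prod_eq_prod_map_map hXm.aemeasurable hYm.aemeasurable).mp hindep,
      ← hid]
  have hintμ : Integrable (fun x : ℝ => x) μ := by
    rw [hμdef]
    exact (integrable_map_measure aestronglyMeasurable_id hXm.aemeasurable).mpr hX
  have hFμ : ∀ x, F x = (μ (Set.Iic x)).toReal := by
    intro x
    rw [hF x, hμdef, Measure.map_apply hXm measurableSet_Iic]
  have hGmeas : Measurable fun x => (μ (Set.Iic x)).toReal := measurable_cdfAux μ
  -- translate the three integrals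
  have e1 : ∫ ω, |X ω - Y ω| ∂P = ∫ p : ℝ × ℝ, |p.1 - p.2| ∂(μ.prod μ) := by
    rw [← hjoint, integral_map (hXm.prodMk hYm).aemeasurable (f := fun p : ℝ × ℝ => |p.1 - p.2|)
      (measurable_fst.sub measurable_snd).abs.aestronglyMeasurable]
  have e2 : ∫ ω, X ω * F (X ω) ∂P = ∫ x, x * (μ (Set.Iic x)).toReal ∂μ := by
    have hme : Measurable fun x : ℝ => x * (μ (Set.Iic x)).toReal :=
      measurable_id.mul hGmeas
    have h2 := integral_map (μ := P) hXm.aemeasurable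
      (f := fun x : ℝ => x * (μ (Set.Iic x)).toReal) hme.aestronglyMeasurable
    rw [← hμdef] at h2
    rw [h2]
    exact integral_congr_ae (Filter.Eventually.of_forall fun ω => by simp only []; rw [hFμ (X ω)])
  have e3 : ∫ ω, X ω ∂P = ∫ x, x ∂μ := by
    have h3 := integral_map (μ := P) hXm.aemeasurable
      (f := fun x : ℝ => x) aestronglyMeasurable_id
    rw [← hμdef] at h3
    exact h3.symm
  rw [e1, e2, e3]
  exact key_prod μ hac hintμ
end

section
/- Let a₁ ≤ b₁ < a₂ < b₂ be real numbers (the intervals A = (a₁,a₂) and B = (b₁,b₂) overlap without inclusion), and let X ~ U(a₁,a₂) and Y ~ U(b₁,b₂) be independent. Then E|X−Y| = [ (b₂−b₁)(b₁−a₁)(b₂−a₁)/2 + (b₂−a₂)(a₂−b₁)(b₂−b₁)/2 + (a₂−b₁)³/3 ] / ( (a₂−a₁)(b₂−b₁) ). -/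
open MeasureTheory ProbabilityTheory

lemma eado_integral_quadratic (p q r a b : ℝ) :
    ∫ x in a..b, (p * x ^ 2 + q * x + r) =
      p * (b ^ 3 - a ^ 3) / 3 + q * (b ^ 2 - a ^ 2) / 2 + r * (b - a) := by
  have h : ∀ x ∈ Set.uIcc a b,
      HasDerivAt (fun x : ℝ => p * x ^ 3 / 3 + q * x ^ 2 / 2 + r * x)
        (p * x ^ 2 + q * x + r) x := by
    intro x _
    have h1 : HasDerivAt (fun x : ℝ => p * x ^ 3 / 3) (p * x ^ 2) x := by
      have := ((hasDerivAt_pow 3 x).const_mul p).div_const 3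
      refine this.congr_deriv ?_
      push_cast; ring
    have h2 : HasDerivAt (fun x : ℝ => q * x ^ 2 / 2) (q * x) x := by
      have := ((hasDerivAt_pow 2 x).const_mul q).div_const 2
      refine this.congr_deriv ?_
      push_cast; ring
    have h3 : HasDerivAt (fun x : ℝ => r * x) r x := by
      simpa using (hasDerivAt_id x).const_mul r
    exact (h1.add h2).add h3
  rw [intervalIntegral.integral_eq_sub_of_hasDerivAt h (Continuous.intervalIntegrable (by fun_prop) _ _)]
  ring

lemma eado_inner_le {x b₁ b₂ : ℝ} (hx : x ≤ b₁) (h : b₁ ≤ b₂) :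
    ∫ y in Set.Ioo b₁ b₂, |x - y| =
      ((b₂ - x) ^ 2 - (b₁ - x) ^ 2) / 2 := by
  rw [← integral_Ioc_eq_integral_Ioo, ← intervalIntegral.integral_of_le h]
  have : ∫ y in b₁..b₂, |x - y| = ∫ y in b₁..b₂, (0 * y ^ 2 + 1 * y + (-x)) := by
    apply intervalIntegral.integral_congr
    intro y hy
    rw [Set.uIcc_of_le h] at hy
    have hxy : x ≤ y := le_trans hx hy.1
    show |x - y| = _
    rw [abs_sub_comm, abs_of_nonneg (by linarith)]
    ring
  rw [this, eado_integral_quadratic]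
  ring

lemma eado_inner_mid {x b₁ b₂ : ℝ} (h1 : b₁ ≤ x) (h2 : x ≤ b₂) :
    ∫ y in Set.Ioo b₁ b₂, |x - y| =
      ((x - b₁) ^ 2 + (b₂ - x) ^ 2) / 2 := by
  rw [← integral_Ioc_eq_integral_Ioo, ← intervalIntegral.integral_of_le (h1.trans h2)]
  have hint : ∀ u v : ℝ, IntervalIntegrable (fun y => |x - y|) volume u v := by
    intro u v; exact (Continuous.intervalIntegrable (by fun_prop)) _ _
  rw [← intervalIntegral.integral_add_adjacent_intervals (hint b₁ x) (hint x b₂)]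
  have e1 : ∫ y in b₁..x, |x - y| = ∫ y in b₁..x, (0 * y ^ 2 + (-1) * y + x) := by
    apply intervalIntegral.integral_congr
    intro y hy
    rw [Set.uIcc_of_le h1] at hy
    show |x - y| = _
    rw [abs_of_nonneg (by linarith [hy.2])]
    ring
  have e2 : ∫ y in x..b₂, |x - y| = ∫ y in x..b₂, (0 * y ^ 2 + 1 * y + (-x)) := by
    apply intervalIntegral.integral_congr
    intro y hy
    rw [Set.uIcc_of_le h2] at hy
    show |x - y| = _
    rw [abs_sub_comm, abs_of_nonneg (by linarith [hy.1])]
    ring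
  rw [e1, e2, eado_integral_quadratic, eado_integral_quadratic]
  ring

lemma eado_outer {a₁ a₂ b₁ b₂ : ℝ} (h₁ : a₁ ≤ b₁) (h₂ : b₁ < a₂) (h₃ : a₂ < b₂) :
    ∫ x in Set.Ioo a₁ a₂, ∫ y in Set.Ioo b₁ b₂, |x - y| =
      (b₂ - b₁) * (b₁ - a₁) * (b₂ - a₁) / 2
        + (b₂ - a₂) * (a₂ - b₁) * (b₂ - b₁) / 2
        + (a₂ - b₁) ^ 3 / 3 := by
  have hb : b₁ ≤ b₂ := le_trans h₂.le h₃.le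
  have ha : a₁ ≤ a₂ := le_trans h₁ h₂.le
  rw [← integral_Ioc_eq_integral_Ioo, ← intervalIntegral.integral_of_le ha]
  have hi1 : IntervalIntegrable (fun x => ∫ y in Set.Ioo b₁ b₂, |x - y|) volume a₁ b₁ := by
    rw [intervalIntegrable_iff_integrableOn_Ioc_of_le h₁]
    refine IntegrableOn.congr_fun
      (f := fun x => ((b₂ - x) ^ 2 - (b₁ - x) ^ 2) / 2)
      (Continuous.integrableOn_Ioc (by fun_prop)) ?_ measurableSet_Ioc
    intro x hx
    exact (eado_inner_le hx.2 hb).symm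
  have hi2 : IntervalIntegrable (fun x => ∫ y in Set.Ioo b₁ b₂, |x - y|) volume b₁ a₂ := by
    rw [intervalIntegrable_iff_integrableOn_Ioc_of_le h₂.le]
    refine IntegrableOn.congr_fun
      (f := fun x => ((x - b₁) ^ 2 + (b₂ - x) ^ 2) / 2)
      (Continuous.integrableOn_Ioc (by fun_prop)) ?_ measurableSet_Ioc
    intro x hx
    exact (eado_inner_mid hx.1.le (hx.2.trans h₃.le)).symm
  rw [← intervalIntegral.integral_add_adjacent_intervals hi1 hi2]
  have e1 : ∫ x in a₁..b₁, ∫ y in Set.Ioo b₁ b₂, |x - y|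
      = ∫ x in a₁..b₁, (0 * x ^ 2 + (b₁ - b₂) * x + (b₂ ^ 2 - b₁ ^ 2) / 2) := by
    apply intervalIntegral.integral_congr
    intro x hx
    rw [Set.uIcc_of_le h₁] at hx
    show (∫ y in Set.Ioo b₁ b₂, |x - y|) = _
    rw [eado_inner_le hx.2 hb]
    ring
  have e2 : ∫ x in b₁..a₂, ∫ y in Set.Ioo b₁ b₂, |x - y|
      = ∫ x in b₁..a₂, (1 * x ^ 2 + (-(b₁ + b₂)) * x + (b₁ ^ 2 + b₂ ^ 2) / 2) := by
    apply intervalIntegral.integral_congr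
    intro x hx
    rw [Set.uIcc_of_le h₂.le] at hx
    show (∫ y in Set.Ioo b₁ b₂, |x - y|) = _
    rw [eado_inner_mid hx.1 (hx.2.trans h₃.le)]
    ring
  rw [e1, e2, eado_integral_quadratic, eado_integral_quadratic]
  ring

/-- overlap without inclusion: for `a₁ ≤ b₁ < a₂ < b₂` and independent
`X ~ U(a₁,a₂)`, `Y ~ U(b₁,b₂)`,
`E|X−Y| = [(b₂−b₁)(b₁−a₁)(b₂−a₁)/2 + (b₂−a₂)(a₂−b₁)(b₂−b₁)/2 + (a₂−b₁)³/3] /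
((a₂−a₁)(b₂−b₁))`. -/
theorem expected_abs_diff_uniform_overlap
    {Ω : Type*} {mΩ : MeasurableSpace Ω} (P : Measure Ω) [IsProbabilityMeasure P]
    (X Y : Ω → ℝ)
    (a₁ a₂ b₁ b₂ : ℝ) (h₁ : a₁ ≤ b₁) (h₂ : b₁ < a₂) (h₃ : a₂ < b₂)
    (hX : pdf.IsUniform X (Set.Ioo a₁ a₂) P volume)
    (hY : pdf.IsUniform Y (Set.Ioo b₁ b₂) P volume)
    (hindep : IndepFun X Y P) :
    ∫ ω, |X ω - Y ω| ∂P =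
      ((b₂ - b₁) * (b₁ - a₁) * (b₂ - a₁) / 2
        + (b₂ - a₂) * (a₂ - b₁) * (b₂ - b₁) / 2
        + (a₂ - b₁) ^ 3 / 3) / ((a₂ - a₁) * (b₂ - b₁)) := by
  have ha : a₁ < a₂ := lt_of_le_of_lt h₁ h₂
  have hb : b₁ < b₂ := h₂.trans h₃
  have hvA : volume (Set.Ioo a₁ a₂) = ENNReal.ofReal (a₂ - a₁) := Real.volume_Ioo
  have hvB : volume (Set.Ioo b₁ b₂) = ENNReal.ofReal (b₂ - b₁) := Real.volume_Ioo
  have hA0 : volume (Set.Ioo a₁ a₂) ≠ 0 := by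
    rw [hvA]; simp only [ne_eq, ENNReal.ofReal_eq_zero, not_le]; linarith
  have hB0 : volume (Set.Ioo b₁ b₂) ≠ 0 := by
    rw [hvB]; simp only [ne_eq, ENNReal.ofReal_eq_zero, not_le]; linarith
  have hAt : volume (Set.Ioo a₁ a₂) ≠ ⊤ := by rw [hvA]; exact ENNReal.ofReal_ne_top
  have hBt : volume (Set.Ioo b₁ b₂) ≠ ⊤ := by rw [hvB]; exact ENNReal.ofReal_ne_top
  have hXm : AEMeasurable X P := hX.aemeasurable hA0 hAt
  have hYm : AEMeasurable Y P := hY.aemeasurable hB0 hBt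
  have hmap : P.map (fun ω => (X ω, Y ω)) = (P.map X).prod (P.map Y) :=
    (ProbabilityTheory.indepFun_iff_map_prod_eq_prod_map_map hXm hYm).mp hindep
  have hcont : Continuous fun p : ℝ × ℝ => |p.1 - p.2| := by fun_prop
  have step1 : ∫ ω, |X ω - Y ω| ∂P
      = ∫ p : ℝ × ℝ, |p.1 - p.2| ∂(P.map (fun ω => (X ω, Y ω))) := by
    rw [integral_map (hXm.prodMk hYm) hcont.aestronglyMeasurable]
  haveI hPA : IsProbabilityMeasure ((volume : Measure ℝ)[|Set.Ioo a₁ a₂]) :=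
    ProbabilityTheory.cond_isProbabilityMeasure_of_finite hA0 hAt
  haveI hPB : IsProbabilityMeasure ((volume : Measure ℝ)[|Set.Ioo b₁ b₂]) :=
    ProbabilityTheory.cond_isProbabilityMeasure_of_finite hB0 hBt
  have hprod : ((volume : Measure ℝ)[|Set.Ioo a₁ a₂]).prod ((volume : Measure ℝ)[|Set.Ioo b₁ b₂])
      = ((volume (Set.Ioo a₁ a₂))⁻¹ * (volume (Set.Ioo b₁ b₂))⁻¹) •
          (((volume : Measure ℝ).prod volume).restrict (Set.Ioo a₁ a₂ ×ˢ Set.Ioo b₁ b₂)) := by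
    refine Measure.prod_eq fun s t hs ht => ?_
    rw [ProbabilityTheory.cond_apply measurableSet_Ioo,
      ProbabilityTheory.cond_apply measurableSet_Ioo, Measure.smul_apply,
      Measure.restrict_apply (hs.prod ht), Set.prod_inter_prod, Measure.prod_prod,
      Set.inter_comm s (Set.Ioo a₁ a₂), Set.inter_comm t (Set.Ioo b₁ b₂), smul_eq_mul]
    ring
  have hint : IntegrableOn (fun p : ℝ × ℝ => |p.1 - p.2|)
      (Set.Ioo a₁ a₂ ×ˢ Set.Ioo b₁ b₂) ((volume : Measure ℝ).prod volume) := by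
    rw [← Measure.volume_eq_prod]
    exact (hcont.continuousOn.integrableOn_compact (isCompact_Icc.prod isCompact_Icc)
      (K := Set.Icc a₁ a₂ ×ˢ Set.Icc b₁ b₂)).mono_set
      (Set.prod_mono Set.Ioo_subset_Icc_self Set.Ioo_subset_Icc_self)
  rw [step1, hmap, hX, hY, hprod, integral_smul_measure,
    MeasureTheory.setIntegral_prod _ hint]
  simp only []
  rw [eado_outer h₁ h₂ h₃, hvA, hvB, ENNReal.toReal_mul, ENNReal.toReal_inv, ENNReal.toReal_inv,
    ENNReal.toReal_ofReal (by linarith), ENNReal.toReal_ofReal (by linarith), smul_eq_mul]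
  have hane : a₂ - a₁ ≠ 0 := by linarith
  have hbne : b₂ - b₁ ≠ 0 := by linarith
  field_simp
end

section
/- Let x₁ ≤ x₂ ≤ ⋯ ≤ xₙ and y₁ ≤ y₂ ≤ ⋯ ≤ yₙ be two ordered finite sequences of real numbers and let h : ℝ → ℝ be convex and continuous. Then for every permutation σ of {1, …, n}, Σ_{i=1}^n h(x_i − y_i) ≤ Σ_{i=1}^n h(x_i − y_{σ(i)}); in particular, for every permutation σ, Σ_{i=1}^n |x_i − y_i| ≤ Σ_{i=1}^n |x_i − y_{σ(i)}|, i.e. the identity permutation minimizes Σ_i |x_i − y_{σ(i)}| over all permutations σ. -/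
open Finset

lemma convex_two_point (h : ℝ → ℝ) (hc : ConvexOn ℝ Set.univ h)
    {s t u v : ℝ} (hsu : s ≤ u) (hut : u ≤ t) (huv : u + v = s + t) :
    h u + h v ≤ h s + h t := by
  rcases eq_or_lt_of_le (hsu.trans hut) with hst | hst
  · have hu : u = s := le_antisymm (hst ▸ hut) hsu
    have hv : v = t := by linarith
    rw [hu, hv]
  · set l : ℝ := (t - u) / (t - s) with hl
    have hts : (0:ℝ) < t - s := by linarith
    have hl0 : 0 ≤ l := div_nonneg (by linarith) hts.le
    have hl1 : l ≤ 1 := by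
      rw [div_le_one hts]; linarith
    have hls : l * (t - s) = t - u := div_mul_cancel₀ _ hts.ne'
    have hu' : l * s + (1 - l) * t = u := by nlinarith [hls]
    have hv' : (1 - l) * s + l * t = v := by
      have : (1 - l) * s + l * t = s + t - (l * s + (1 - l) * t) := by ring
      rw [this, hu']; linarith
    have h1 := hc.2 (Set.mem_univ s) (Set.mem_univ t) hl0
      (show (0:ℝ) ≤ 1 - l by linarith) (show l + (1 - l) = 1 by ring)
    have h2 := hc.2 (Set.mem_univ s) (Set.mem_univ t)
      (show (0:ℝ) ≤ 1 - l by linarith) hl0 (show (1 - l) + l = 1 by ring)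
    simp only [smul_eq_mul] at h1 h2
    rw [hu'] at h1; rw [hv'] at h2
    linarith

lemma identity_min_key (n : ℕ) (x y : Fin n → ℝ)
    (hx : Monotone x) (hy : Monotone y)
    (h : ℝ → ℝ) (hconv : ConvexOn ℝ Set.univ h) :
    ∀ σ : Equiv.Perm (Fin n),
      ∑ i, h (x i - y i) ≤ ∑ i, h (x i - y (σ i)) := by
  have main : ∀ N : ℕ, ∀ σ : Equiv.Perm (Fin n),
      (univ.filter fun k => σ k ≠ k).card ≤ N →
      ∑ i, h (x i - y i) ≤ ∑ i, h (x i - y (σ i)) := by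
    intro N
    induction N with
    | zero =>
      intro σ hcard
      have hfix : ∀ k, σ k = k := by
        intro k
        by_contra hk
        have : k ∈ univ.filter fun k => σ k ≠ k := by simp [hk]
        have := Finset.card_pos.2 ⟨k, this⟩
        omega
      refine le_of_eq (Finset.sum_congr rfl fun k _ => by rw [hfix k])
    | succ N ih =>
      intro σ hcard
      by_cases h1 : ∀ k, σ k = k
      · refine le_of_eq (Finset.sum_congr rfl fun k _ => by rw [h1 k])
      push_neg at h1
      set S := univ.filter fun k => σ k ≠ k with hSdef
      have hS : S.Nonempty := by
        obtain ⟨k, hk⟩ := h1; exact ⟨k, by simp [hSdef, hk]⟩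
      set j := S.max' hS with hjdef
      have hjmem : j ∈ S := S.max'_mem hS
      have hjne : σ j ≠ j := by simpa [hSdef] using hjmem
      have hfix : ∀ k, j < k → σ k = k := by
        intro k hk
        by_contra hk'
        have : k ∈ S := by simp [hSdef, hk']
        exact absurd (S.le_max' k this) (not_le.2 hk)
      have hσj : σ j < j := by
        rcases lt_trichotomy (σ j) j with h' | h' | h'
        · exact h'
        · exact absurd h' hjne
        · have := hfix (σ j) h'
          exact absurd (σ.injective this) hjne
      set i := σ.symm j with hidef
      have hij : σ i = j := σ.apply_symm_apply j
      have hine : i ≠ j := fun hh => hjne (hh ▸ hij)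
      have hilt : i < j := by
        rcases lt_trichotomy i j with h' | h' | h'
        · exact h'
        · exact absurd h' hine
        · have := hfix i h'
          rw [this] at hij; exact absurd hij.symm (ne_of_lt h')
      set σ' := σ * Equiv.swap i j with hσ'def
      have hσ'i : σ' i = σ j := by simp [hσ'def, Equiv.swap_apply_left]
      have hσ'j : σ' j = j := by simp [hσ'def, Equiv.swap_apply_right, hij]
      have hσ'k : ∀ k, k ≠ i → k ≠ j → σ' k = σ k := by
        intro k hki hkj
        simp [hσ'def, Equiv.swap_apply_of_ne_of_ne hki hkj]
      -- support bound
      have hsub : (univ.filter fun k => σ' k ≠ k) ⊆ S.erase j := by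
        intro k hk
        simp only [mem_filter, mem_univ, true_and] at hk
        rcases eq_or_ne k j with rfl | hkj
        · exact absurd hσ'j hk
        rcases eq_or_ne k i with rfl | hki
        · refine Finset.mem_erase.2 ⟨hine, ?_⟩
          rw [hSdef, mem_filter]
          exact ⟨mem_univ i, by rw [hij]; exact hine.symm⟩
        · exact Finset.mem_erase.2 ⟨hkj, by simp [hSdef, ← hσ'k k hki hkj, hk]⟩
      have hcard' : (univ.filter fun k => σ' k ≠ k).card ≤ N := by
        have h2 := Finset.card_le_card hsub
        have h3 := Finset.card_erase_of_mem hjmem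
        have h4 := Finset.card_pos.2 ⟨j, hjmem⟩
        omega
      refine (ih σ' hcard').trans ?_
      -- now show ∑ h (x k - y (σ' k)) ≤ ∑ h (x k - y (σ k))
      have split : ∀ g : Fin n → ℝ, ∑ k, g k =
          g i + (g j + ∑ k ∈ (univ.erase i).erase j, g k) := by
        intro g
        rw [← Finset.add_sum_erase _ g (Finset.mem_univ i),
          ← Finset.add_sum_erase _ g (Finset.mem_erase.2 ⟨hine.symm, Finset.mem_univ j⟩)]
      rw [split (fun k => h (x k - y (σ' k))), split (fun k => h (x k - y (σ k)))]
      have hrest : ∑ k ∈ (univ.erase i).erase j, h (x k - y (σ' k)) =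
          ∑ k ∈ (univ.erase i).erase j, h (x k - y (σ k)) := by
        refine Finset.sum_congr rfl fun k hk => ?_
        rw [Finset.mem_erase, Finset.mem_erase] at hk
        rw [hσ'k k hk.2.1 hk.1]
      rw [hrest]
      have hmain : h (x i - y (σ' i)) + h (x j - y (σ' j)) ≤
          h (x i - y (σ i)) + h (x j - y (σ j)) := by
        rw [hσ'i, hσ'j, hij]
        exact convex_two_point h hconv
          (by have := hy hσj.le; linarith)
          (by have := hx hilt.le; linarith)
          (by ring)
      linarith
  intro σ
  exact main _ σ le_rfl

/-- for ordered reals `x₁ ≤ ⋯ ≤ xₙ`, `y₁ ≤ ⋯ ≤ yₙ` and `h : ℝ → ℝ`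
convex and continuous, the identity permutation minimizes
`∑ i, h (x i − y (σ i))` over all permutations `σ`; in particular it minimizes
`∑ i, |x i − y (σ i)|`. -/
theorem identity_permutation_minimizes_convex_cost
    (n : ℕ) (hn : 0 < n) (x y : Fin n → ℝ)
    (hx : Monotone x) (hy : Monotone y)
    (h : ℝ → ℝ) (hconv : ConvexOn ℝ Set.univ h) (hcont : Continuous h) :
    ∀ σ : Equiv.Perm (Fin n),
      (∑ i, h (x i - y i) ≤ ∑ i, h (x i - y (σ i))) ∧
      (∑ i, |x i - y i| ≤ ∑ i, |x i - y (σ i)|) := by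
  intro σ
  refine ⟨identity_min_key n x y hx hy h hconv σ, ?_⟩
  have habs : ConvexOn ℝ Set.univ (fun t : ℝ => |t|) := by
    exact (convexOn_univ_norm (E := ℝ))
  exact identity_min_key n x y hx hy _ habs σ
end

section
/- Let μ and ν be Borel probability measures on ℝ with cumulative distribution functions F and G and quantile functions F⁻ and G⁻, and let λ be Lebesgue measure restricted to the interval (0,1). Let λ_K be the pushforward measure of λ under the map t ↦ (F⁻(t), G⁻(t)). Then for all real x and y, λ_K( (−∞,x] × (−∞,y] ) = min( F(x), G(y) ); that is, λ_K has joint cumulative distribution function H(x,y) = min(F(x), G(y)). -/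
open MeasureTheory Set

/-- The cumulative distribution function of a measure on `ℝ`: `F(x) = μ((−∞,x])`. -/
noncomputable def cdfOf (μ : Measure ℝ) (x : ℝ) : ℝ := (μ (Set.Iic x)).toReal

/-- The quantile function (generalized inverse of the cdf):
`F⁻(t) = inf {x : F(x) ≥ t}`. -/
noncomputable def quantileOf (μ : Measure ℝ) (t : ℝ) : ℝ :=
  sInf {x : ℝ | t ≤ cdfOf μ x}

lemma cdfOf_eq (μ : Measure ℝ) [IsProbabilityMeasure μ] :
    cdfOf μ = ProbabilityTheory.cdf μ := by
  ext x
  rw [cdfOf, ProbabilityTheory.cdf_eq_real, measureReal_def]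

lemma bddBelow_quantile_set (μ : Measure ℝ) [IsProbabilityMeasure μ] {t : ℝ} (ht : 0 < t) :
    BddBelow {x : ℝ | t ≤ cdfOf μ x} := by
  rw [cdfOf_eq]
  have h0 := ProbabilityTheory.tendsto_cdf_atBot μ
  have : ∀ᶠ y in Filter.atBot, ProbabilityTheory.cdf μ y < t :=
    h0.eventually_lt_const ht
  obtain ⟨y, hy⟩ := this.exists
  refine ⟨y, fun z hz => ?_⟩
  by_contra h
  push_neg at h
  exact absurd (hz.trans (ProbabilityTheory.monotone_cdf μ h.le)) (not_le.2 hy)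

lemma nonempty_quantile_set (μ : Measure ℝ) [IsProbabilityMeasure μ] {t : ℝ} (ht : t < 1) :
    {x : ℝ | t ≤ cdfOf μ x}.Nonempty := by
  rw [cdfOf_eq]
  have h1 := ProbabilityTheory.tendsto_cdf_atTop μ
  have : ∀ᶠ y in Filter.atTop, t < ProbabilityTheory.cdf μ y :=
    h1.eventually_const_lt ht
  obtain ⟨y, hy⟩ := this.exists
  exact ⟨y, hy.le⟩

/-- Galois inequality: for `t ∈ (0,1)`, `F⁻(t) ≤ x ↔ t ≤ F(x)`. -/
lemma quantile_le_iff (μ : Measure ℝ) [IsProbabilityMeasure μ] {t x : ℝ}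
    (ht0 : 0 < t) (ht1 : t < 1) :
    quantileOf μ t ≤ x ↔ t ≤ cdfOf μ x := by
  have hbdd := bddBelow_quantile_set μ ht0
  have hne := nonempty_quantile_set μ ht1
  constructor
  · intro h
    -- every s > quantile is in the set
    have hq : t ≤ ProbabilityTheory.cdf μ (quantileOf μ t) := by
      have hmem : ∀ s, quantileOf μ t < s → t ≤ ProbabilityTheory.cdf μ s := by
        intro s hs
        obtain ⟨u, hu, hus⟩ := (csInf_lt_iff hbdd hne).1 hs
        rw [cdfOf_eq] at hu
        exact hu.trans (ProbabilityTheory.monotone_cdf μ hus.le)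
      have hrc := (ProbabilityTheory.cdf μ).right_continuous (quantileOf μ t)
      have hrc' : Filter.Tendsto (ProbabilityTheory.cdf μ) (nhdsWithin (quantileOf μ t)
          (Ioi (quantileOf μ t))) (nhds (ProbabilityTheory.cdf μ (quantileOf μ t))) :=
        hrc.mono_left (nhdsWithin_mono _ Ioi_subset_Ici_self)
      exact ge_of_tendsto hrc' (by
        filter_upwards [self_mem_nhdsWithin] with s hs using hmem s hs)
    rw [cdfOf_eq]
    exact hq.trans (ProbabilityTheory.monotone_cdf μ h)
  · intro h
    exact csInf_le hbdd h

lemma monotoneOn_quantile (μ : Measure ℝ) [IsProbabilityMeasure μ] :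
    MonotoneOn (quantileOf μ) (Ioo (0:ℝ) 1) := by
  intro a ha b hb hab
  exact csInf_le_csInf (bddBelow_quantile_set μ ha.1) (nonempty_quantile_set μ hb.2)
    (fun x hx => hab.trans hx)

/-- the pushforward `λ_K` of Lebesgue measure on `(0,1)` under
`t ↦ (F⁻(t), G⁻(t))` has joint cumulative distribution function
`H(x,y) = min(F(x), G(y))`. -/
theorem quantile_coupling_cdf
    (μ ν : Measure ℝ) [IsProbabilityMeasure μ] [IsProbabilityMeasure ν] :
    ∀ x y : ℝ,
      (((volume.restrict (Set.Ioo (0 : ℝ) 1)).map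
          (fun t => (quantileOf μ t, quantileOf ν t)))
        (Set.Iic x ×ˢ Set.Iic y)).toReal = min (cdfOf μ x) (cdfOf ν y) := by
  intro x y
  have hmeas1 : AEMeasurable (quantileOf μ) (volume.restrict (Ioo (0:ℝ) 1)) :=
    aemeasurable_restrict_of_monotoneOn measurableSet_Ioo (monotoneOn_quantile μ)
  have hmeas2 : AEMeasurable (quantileOf ν) (volume.restrict (Ioo (0:ℝ) 1)) :=
    aemeasurable_restrict_of_monotoneOn measurableSet_Ioo (monotoneOn_quantile ν)
  have hmeas : AEMeasurable (fun t => (quantileOf μ t, quantileOf ν t))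
      (volume.restrict (Ioo (0:ℝ) 1)) := hmeas1.prodMk hmeas2
  rw [Measure.map_apply_of_aemeasurable hmeas (measurableSet_Iic.prod measurableSet_Iic)]
  set m := min (cdfOf μ x) (cdfOf ν y) with hm
  have hm0 : 0 ≤ m := le_min (ENNReal.toReal_nonneg) (ENNReal.toReal_nonneg)
  have hm1 : m ≤ 1 := by
    refine (min_le_left _ _).trans ?_
    rw [cdfOf_eq]; exact ProbabilityTheory.cdf_le_one μ x
  rw [Measure.restrict_apply' measurableSet_Ioo]
  have hset : (fun t => (quantileOf μ t, quantileOf ν t)) ⁻¹' (Iic x ×ˢ Iic y) ∩ Ioo 0 1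
      = Iic m ∩ Ioo 0 1 := by
    ext t
    simp only [mem_inter_iff, mem_preimage, mem_prod, mem_Iic, mem_Ioo]
    constructor
    · rintro ⟨⟨h1, h2⟩, ht⟩
      exact ⟨le_min ((quantile_le_iff μ ht.1 ht.2).1 h1) ((quantile_le_iff ν ht.1 ht.2).1 h2), ht⟩
    · rintro ⟨hle, ht⟩
      exact ⟨⟨(quantile_le_iff μ ht.1 ht.2).2 (hle.trans (min_le_left _ _)),
        (quantile_le_iff ν ht.1 ht.2).2 (hle.trans (min_le_right _ _))⟩, ht⟩
  rw [hset]
  have hvol : volume (Iic m ∩ Ioo (0:ℝ) 1) = ENNReal.ofReal m := by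
    apply le_antisymm
    · calc volume (Iic m ∩ Ioo (0:ℝ) 1) ≤ volume (Ioc 0 m) := by
            apply measure_mono
            rintro t ⟨h1, h2, _⟩
            exact ⟨h2, h1⟩
          _ = ENNReal.ofReal m := by rw [Real.volume_Ioc, sub_zero]
    · calc ENNReal.ofReal m = volume (Ioo (0:ℝ) m) := by rw [Real.volume_Ioo, sub_zero]
          _ ≤ volume (Iic m ∩ Ioo (0:ℝ) 1) := by
            apply measure_mono
            rintro t ⟨h1, h2⟩
            exact ⟨h2.le, h1, h2.trans_le hm1⟩
  rw [hvol, ENNReal.toReal_ofReal hm0]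
end

section
/- Let μ and ν be Borel probability measures on ℝ with cumulative distribution functions F and G, where F is continuous, and let G⁻ be the quantile function of G. Then the pushforward measure π of μ under the map x ↦ (x, G⁻(F(x))) satisfies, for all real x and y, π( (−∞,x] × (−∞,y] ) = min( F(x), G(y) ); that is, the deterministic transport plan induced by the transport map T = G⁻∘F has joint cumulative distribution function H(x,y) = min(F(x), G(y)). -/
open MeasureTheory Set Filter Topology

section Aux

variable (μ : Measure ℝ) [IsProbabilityMeasure μ]

lemma cdfOf_eq_cdf : cdfOf μ = ⇑(ProbabilityTheory.cdf μ) := by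
  funext x
  rw [cdfOf, ProbabilityTheory.cdf_eq_real, measureReal_def]

lemma cdfOf_mono : Monotone (cdfOf μ) := by
  rw [cdfOf_eq_cdf]
  exact (ProbabilityTheory.cdf μ).mono

lemma cdfOf_nonneg (x : ℝ) : 0 ≤ cdfOf μ x := ENNReal.toReal_nonneg

lemma cdfOf_le_one (x : ℝ) : cdfOf μ x ≤ 1 := by
  rw [cdfOf_eq_cdf]; exact ProbabilityTheory.cdf_le_one μ x

lemma measure_Iic_eq (x : ℝ) : μ (Set.Iic x) = ENNReal.ofReal (cdfOf μ x) := by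
  rw [cdfOf_eq_cdf, ProbabilityTheory.ofReal_cdf]

/-- key Galois-type property of the quantile function, for `t ∈ (0,1)`. -/
lemma quantileOf_le_iff {t : ℝ} (ht0 : 0 < t) (ht1 : t < 1) (y : ℝ) :
    quantileOf μ t ≤ y ↔ t ≤ cdfOf μ y := by
  set S := {x : ℝ | t ≤ cdfOf μ x} with hS
  have hmono := cdfOf_mono μ
  have hne : S.Nonempty := by
    obtain ⟨x, hx⟩ := (((ProbabilityTheory.tendsto_cdf_atTop μ).eventually_const_lt ht1)).exists
    exact ⟨x, by rw [hS, mem_setOf_eq, cdfOf_eq_cdf]; exact hx.le⟩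
  obtain ⟨w, hw⟩ := ((ProbabilityTheory.tendsto_cdf_atBot μ).eventually_lt_const ht0).exists
  have hw' : cdfOf μ w < t := by rw [cdfOf_eq_cdf]; exact hw
  have hbdd : BddBelow S := by
    refine ⟨w, fun x hx => ?_⟩
    by_contra h
    push_neg at h
    exact absurd (le_trans hx (hmono h.le)) (not_le.2 hw')
  -- t ≤ cdf at the infimum, by right continuity
  have hmem : t ≤ cdfOf μ (sInf S) := by
    rw [cdfOf_eq_cdf]
    have hrc : Tendsto (ProbabilityTheory.cdf μ) (𝓝[>] (sInf S))
        (𝓝 (ProbabilityTheory.cdf μ (sInf S))) :=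
      ((ProbabilityTheory.cdf μ).right_continuous (sInf S)).mono_left
        (nhdsWithin_mono _ Ioi_subset_Ici_self)
    refine ge_of_tendsto hrc ?_
    filter_upwards [self_mem_nhdsWithin] with z hz
    obtain ⟨s, hsS, hsz⟩ := (csInf_lt_iff hbdd hne).1 hz
    calc t ≤ cdfOf μ s := hsS
    _ ≤ cdfOf μ z := hmono hsz.le
    _ = ProbabilityTheory.cdf μ z := by rw [cdfOf_eq_cdf]
  constructor
  · intro h
    exact hmem.trans (hmono h)
  · intro h
    exact csInf_le hbdd h

end Aux

section Null

variable (μ : Measure ℝ) [IsProbabilityMeasure μ]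

lemma null_cdf_zero (hF : Continuous (cdfOf μ)) : μ {z | cdfOf μ z = 0} = 0 := by
  set s := {z | cdfOf μ z = 0} with hs
  rcases s.eq_empty_or_nonempty with h | h
  · simp [h]
  have hclosed : IsClosed s := isClosed_eq hF continuous_const
  by_cases hbdd : BddAbove s
  · have ha : sSup s ∈ s := hclosed.csSup_mem h hbdd
    have hsub : s ⊆ Set.Iic (sSup s) := fun z hz => le_csSup hbdd hz
    refine measure_mono_null hsub ?_
    rw [measure_Iic_eq μ, ha, ENNReal.ofReal_zero]
  · exfalso
    have hF0 : ∀ x : ℝ, cdfOf μ x = 0 := by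
      intro x
      obtain ⟨z, hzs, hzx⟩ := not_bddAbove_iff.1 hbdd x
      exact le_antisymm (hzs ▸ cdfOf_mono μ hzx.le) (cdfOf_nonneg μ x)
    have huniv : (Set.univ : Set ℝ) = ⋃ n : ℕ, Set.Iic (n : ℝ) := by
      ext z
      simp only [mem_univ, mem_iUnion, mem_Iic, true_iff]
      obtain ⟨n, hn⟩ := exists_nat_ge z
      exact ⟨n, hn⟩
    have h1 : μ Set.univ = 0 := by
      rw [huniv]
      refine measure_iUnion_null fun n => ?_
      rw [measure_Iic_eq μ, hF0, ENNReal.ofReal_zero]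
    simp [measure_univ] at h1

lemma null_cdf_one (hF : Continuous (cdfOf μ)) : μ {z | cdfOf μ z = 1} = 0 := by
  set s := {z | cdfOf μ z = 1} with hs
  rcases s.eq_empty_or_nonempty with h | h
  · simp [h]
  have hclosed : IsClosed s := isClosed_eq hF continuous_const
  by_cases hbdd : BddBelow s
  · set a := sInf s with ha
    have hamem : a ∈ s := hclosed.csInf_mem h hbdd
    have hsub : s ⊆ Set.Ici a := fun z hz => csInf_le hbdd hz
    refine measure_mono_null hsub ?_
    have hsingle : μ {a} = 0 := by
      have hmeas := ProbabilityTheory.measure_cdf (μ := μ)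
      have hll : Function.leftLim (⇑(ProbabilityTheory.cdf μ)) a
          = ProbabilityTheory.cdf μ a := by
        have hca : ContinuousWithinAt (⇑(ProbabilityTheory.cdf μ)) (Set.Iio a) a := by
          rw [← cdfOf_eq_cdf]
          exact hF.continuousAt.continuousWithinAt
        exact (ProbabilityTheory.cdf μ).mono.continuousWithinAt_Iio_iff_leftLim_eq.1 hca
      calc μ {a} = (ProbabilityTheory.cdf μ).measure {a} := by rw [hmeas]
      _ = ENNReal.ofReal (ProbabilityTheory.cdf μ a
            - Function.leftLim (⇑(ProbabilityTheory.cdf μ)) a) :=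
          (ProbabilityTheory.cdf μ).measure_singleton a
      _ = 0 := by rw [hll, sub_self, ENNReal.ofReal_zero]
    have hIoi : μ (Set.Ioi a) = 0 := by
      have : μ (Set.Ioi a) = 1 - μ (Set.Iic a) := by
        rw [← Set.compl_Iic]
        exact prob_compl_eq_one_sub measurableSet_Iic
      rw [this, measure_Iic_eq μ, hamem, ENNReal.ofReal_one, tsub_self]
    have hsplit : Set.Ici a ⊆ {a} ∪ Set.Ioi a := by
      intro z hz
      rcases eq_or_lt_of_le (mem_Ici.1 hz) with h' | h'
      · exact Or.inl (by simp [← h'])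
      · exact Or.inr h'
    exact measure_mono_null hsplit (measure_union_null hsingle hIoi)
  · exfalso
    have hF1 : ∀ x : ℝ, cdfOf μ x = 1 := by
      intro x
      obtain ⟨z, hzs, hzx⟩ := not_bddBelow_iff.1 hbdd x
      exact le_antisymm (cdfOf_le_one μ x) (hzs ▸ cdfOf_mono μ hzx.le)
    have h1 : μ (⋃ n : ℕ, Set.Ioi (-(n : ℝ))) = 0 := by
      refine measure_iUnion_null fun n => ?_
      have : μ (Set.Ioi (-(n : ℝ))) = 1 - μ (Set.Iic (-(n : ℝ))) := by
        rw [← Set.compl_Iic]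
        exact prob_compl_eq_one_sub measurableSet_Iic
      rw [this, measure_Iic_eq μ, hF1, ENNReal.ofReal_one, tsub_self]
    have huniv : (⋃ n : ℕ, Set.Ioi (-(n : ℝ))) = Set.univ := by
      ext z
      simp only [mem_univ, mem_iUnion, mem_Ioi, iff_true]
      obtain ⟨n, hn⟩ := exists_nat_gt (-z)
      exact ⟨n, by linarith⟩
    rw [huniv] at h1
    simp [measure_univ] at h1

lemma ae_cdf_mem (hF : Continuous (cdfOf μ)) :
    ∀ᵐ z ∂μ, 0 < cdfOf μ z ∧ cdfOf μ z < 1 := by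
  have hnull : μ ({z | cdfOf μ z = 0} ∪ {z | cdfOf μ z = 1}) = 0 :=
    measure_union_null (null_cdf_zero μ hF) (null_cdf_one μ hF)
  refine (measure_mono_null ?_ hnull : μ {z | ¬(0 < cdfOf μ z ∧ cdfOf μ z < 1)} = 0)
  intro z hz
  simp only [mem_setOf_eq, not_and_or, not_lt] at hz
  rcases hz with h | h
  · exact Or.inl (le_antisymm h (cdfOf_nonneg μ z))
  · exact Or.inr (le_antisymm (cdfOf_le_one μ z) h)

end Null

/-- if the cdf `F` of `μ` is continuous, the deterministic transport plan
induced by the transport map `T = G⁻ ∘ F`, i.e. the pushforward of `μ` under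
`x ↦ (x, G⁻(F x))`, has joint cumulative distribution function
`H(x,y) = min(F(x), G(y))`. -/
theorem deterministic_plan_cdf_of_continuous_cdf
    (μ ν : Measure ℝ) [IsProbabilityMeasure μ] [IsProbabilityMeasure ν]
    (hF : Continuous (cdfOf μ)) :
    ∀ x y : ℝ,
      ((μ.map (fun x => (x, quantileOf ν (cdfOf μ x))))
        (Set.Iic x ×ˢ Set.Iic y)).toReal = min (cdfOf μ x) (cdfOf ν y) := by
  intro x y
  have hFmono := cdfOf_mono μ
  -- the measurable modification of the transport map
  set g : ℝ → ℝ := fun z =>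
    if 0 < cdfOf μ z ∧ cdfOf μ z < 1 then quantileOf ν (cdfOf μ z) else 0 with hg_def
  have hE : MeasurableSet {z : ℝ | 0 < cdfOf μ z ∧ cdfOf μ z < 1} :=
    (measurableSet_lt measurable_const hF.measurable).inter
      (measurableSet_lt hF.measurable measurable_const)
  have hg : Measurable g := by
    refine measurable_of_Iic fun c => ?_
    have : g ⁻¹' Set.Iic c =
        ({z : ℝ | 0 < cdfOf μ z ∧ cdfOf μ z < 1} ∩ cdfOf μ ⁻¹' Set.Iic (cdfOf ν c)) ∪
        ({z : ℝ | 0 < cdfOf μ z ∧ cdfOf μ z < 1}ᶜ ∩ {z : ℝ | (0:ℝ) ≤ c}) := by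
      ext z
      simp only [mem_preimage, mem_Iic, mem_union, mem_inter_iff, mem_setOf_eq, mem_compl_iff,
        hg_def]
      split_ifs with h
      · rw [quantileOf_le_iff ν h.1 h.2 c]
        simp [h]
      · simp [h]
    rw [this]
    refine (hE.inter (hF.measurable measurableSet_Iic)).union (hE.compl.inter ?_)
    by_cases h0 : (0:ℝ) ≤ c
    · simp only [h0, setOf_true]; exact MeasurableSet.univ
    · simp only [h0, setOf_false]; exact MeasurableSet.empty
  -- the two maps agree a.e.
  have hae : (fun z => (z, quantileOf ν (cdfOf μ z))) =ᵐ[μ] fun z => (z, g z) := by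
    filter_upwards [ae_cdf_mem μ hF] with z hz
    simp [hg_def, hz.1, hz.2]
  rw [Measure.map_congr hae,
    Measure.map_apply (show Measurable fun z : ℝ => (z, g z) from measurable_id.prodMk hg) (measurableSet_Iic.prod measurableSet_Iic)]
  have hpre : (fun z => (z, g z)) ⁻¹' (Set.Iic x ×ˢ Set.Iic y)
      = {z | z ≤ x ∧ g z ≤ y} := by
    ext z
    simp [Set.mem_prod]
  rw [hpre]
  -- replace by the nicer set
  have hcongr : μ {z | z ≤ x ∧ g z ≤ y} = μ {z | z ≤ x ∧ cdfOf μ z ≤ cdfOf ν y} := by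
    refine measure_congr (eventuallyEq_set.2 ?_)
    filter_upwards [ae_cdf_mem μ hF] with z hz
    simp only [mem_setOf_eq, hg_def, hz, if_true, and_congr_right_iff]
    intro _
    exact quantileOf_le_iff ν hz.1 hz.2 y
  rw [hcongr]
  by_cases hcase : cdfOf μ x ≤ cdfOf ν y
  · -- the set is all of Iic x
    have hset : {z | z ≤ x ∧ cdfOf μ z ≤ cdfOf ν y} = Set.Iic x := by
      ext z
      simp only [mem_setOf_eq, mem_Iic, and_iff_left_iff_imp]
      exact fun hz => (hFmono hz).trans hcase
    rw [hset, min_eq_left hcase]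
    rfl
  · push_neg at hcase
    rw [min_eq_right hcase.le]
    by_cases h0 : cdfOf ν y ≤ 0
    · have hGy : cdfOf ν y = 0 := le_antisymm h0 (cdfOf_nonneg ν y)
      have hsub : {z | z ≤ x ∧ cdfOf μ z ≤ cdfOf ν y} ⊆ {z | cdfOf μ z = 0} := by
        intro z hz
        exact le_antisymm (hGy ▸ hz.2) (cdfOf_nonneg μ z)
      rw [measure_mono_null hsub (null_cdf_zero μ hF), hGy]
      simp
    · push_neg at h0
      set S' := {z | z ≤ x ∧ cdfOf μ z ≤ cdfOf ν y} with hS'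
      have hclosed : IsClosed S' := by
        have : S' = Set.Iic x ∩ cdfOf μ ⁻¹' Set.Iic (cdfOf ν y) := by
          ext z; simp [hS']
        rw [this]
        exact isClosed_Iic.inter (isClosed_Iic.preimage hF)
      have hne : S'.Nonempty := by
        obtain ⟨w, hw⟩ :=
          ((ProbabilityTheory.tendsto_cdf_atBot μ).eventually_lt_const h0).exists
        have hw' : cdfOf μ w < cdfOf ν y := by rw [cdfOf_eq_cdf]; exact hw
        have hwx : w ≤ x := by
          by_contra h
          push_neg at h
          exact absurd (hFmono h.le) (not_le.2 (hw'.trans hcase))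
        exact ⟨w, hwx, hw'.le⟩
      have hbdd : BddAbove S' := ⟨x, fun z hz => hz.1⟩
      set a := sSup S' with ha
      have hamem : a ∈ S' := hclosed.csSup_mem hne hbdd
      have hset : S' = Set.Iic a := by
        ext z
        simp only [mem_Iic]
        constructor
        · exact fun hz => le_csSup hbdd hz
        · intro hz
          exact ⟨hz.trans hamem.1, (hFmono hz).trans hamem.2⟩
      have hFa : cdfOf μ a = cdfOf ν y := by
        refine le_antisymm hamem.2 ?_
        by_contra h
        push_neg at h
        -- find a point slightly to the right of a still in S'
        have hax : a < x := by
          rcases lt_or_eq_of_le hamem.1 with h' | h'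
          · exact h'
          · exfalso; rw [h'] at h; exact absurd h (not_lt.2 hcase.le)
        have hopen : IsOpen (cdfOf μ ⁻¹' Set.Iio (cdfOf ν y)) := isOpen_Iio.preimage hF
        obtain ⟨ε, hε, hball⟩ := Metric.isOpen_iff.1 hopen a h
        set b := a + min ε (x - a) / 2 with hb
        have hmin : 0 < min ε (x - a) := lt_min hε (by linarith)
        have hab : a < b := by rw [hb]; linarith
        have hbx : b ≤ x := by
          have : min ε (x - a) ≤ x - a := min_le_right _ _
          rw [hb]; linarith
        have hbball : b ∈ Metric.ball a ε := by
          rw [Metric.mem_ball, Real.dist_eq, hb]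
          have h1 : min ε (x - a) ≤ ε := min_le_left _ _
          rw [abs_of_nonneg (by linarith)]
          linarith
        have hbS : b ∈ S' := ⟨hbx, (hball hbball).le⟩
        exact absurd (le_csSup hbdd hbS) (not_le.2 hab)
      rw [hset, ← hFa]
      rfl
end
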